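/- Let F : ℝ³ → ℝ^{3×3} satisfy |F(x)| ≤ C(1+|x|)^{-2}. Define W(x) = ∫₀¹ ∫_{ℝ³} ∇S(x-y, 1-s) s^{-1} F(y/√s) dy ds where S is the Oseen kernel with |∇S(x,t)| ≤ C(√t+|x|)^{-4}. Then |W(x)| ≤ C(1+|x|)^{-2} for all x ∈ ℝ³. -/

import Mathlib

open MeasureTheory Filter Topology ENNReal NNReal

noncomputable section

abbrev E3 := EuclideanSpace ℝ (Fin 3)

namespace StokesAux

lemma rpow_neg_four {x : ℝ} (hx : 0 < x) : x ^ (-(4:ℝ)) = (x ^ 4)⁻¹ := by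
  rw [Real.rpow_neg hx.le, show ((4:ℝ)) = ((4:ℕ):ℝ) by norm_num, Real.rpow_natCast]

lemma rpow_neg_two {x : ℝ} (hx : 0 < x) : x ^ (-(2:ℝ)) = (x ^ 2)⁻¹ := by
  rw [Real.rpow_neg hx.le, show ((2:ℝ)) = ((2:ℕ):ℝ) by norm_num, Real.rpow_natCast]

lemma integrable_base : Integrable (fun z : E3 => ((1 + ‖z‖) ^ 4)⁻¹) := by
  have h : ((Module.finrank ℝ E3 : ℝ)) < 4 := by
    simp [finrank_euclideanSpace_fin]; norm_num
  refine (integrable_one_add_norm (E := E3) (r := 4) h).congr ?_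
  filter_upwards with z
  rw [rpow_neg_four (by positivity)]

def c0 : ℝ := ∫ z : E3, ((1 + ‖z‖) ^ 4)⁻¹

lemma c0_nonneg : 0 ≤ c0 := integral_nonneg fun z => by positivity

lemma shift_eq {t : ℝ} (ht : 0 < t) (z : E3) :
    ((t + ‖z‖) ^ 4)⁻¹ = (t ^ 4)⁻¹ * ((1 + ‖t⁻¹ • z‖) ^ 4)⁻¹ := by
  have h : ‖t⁻¹ • z‖ = t⁻¹ * ‖z‖ := by
    rw [norm_smul, Real.norm_eq_abs, abs_of_pos (inv_pos.2 ht)]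
  rw [h]
  have h1 : 1 + t⁻¹ * ‖z‖ = t⁻¹ * (t + ‖z‖) := by field_simp
  rw [h1]
  have hz : (0:ℝ) < t + ‖z‖ := by positivity
  field_simp

lemma integrable_shift {t : ℝ} (ht : 0 < t) :
    Integrable (fun z : E3 => ((t + ‖z‖) ^ 4)⁻¹) := by
  have h1 : Integrable (fun z : E3 => ((1 + ‖t⁻¹ • z‖) ^ 4)⁻¹) :=
    (integrable_comp_smul_iff volume (fun w : E3 => ((1 + ‖w‖) ^ 4)⁻¹)
      (inv_ne_zero ht.ne')).2 integrable_base
  refine (h1.const_mul ((t ^ 4)⁻¹)).congr ?_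
  filter_upwards with z
  rw [shift_eq ht]

lemma integral_shift {t : ℝ} (ht : 0 < t) :
    ∫ z : E3, ((t + ‖z‖) ^ 4)⁻¹ = c0 * t⁻¹ := by
  simp_rw [fun z => shift_eq ht z]
  rw [integral_const_mul,
    Measure.integral_comp_smul (volume) (fun w : E3 => ((1 + ‖w‖) ^ 4)⁻¹) t⁻¹]
  have : Module.finrank ℝ E3 = 3 := finrank_euclideanSpace_fin
  rw [this]
  rw [smul_eq_mul, ← c0]
  have h4 : (0:ℝ) < t ^ 4 := by positivity
  rw [abs_of_pos (by positivity : (0:ℝ) < ((t⁻¹ ^ 3)⁻¹))]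
  field_simp

lemma sqrt_inv_intint : IntervalIntegrable (fun s : ℝ => s ^ (-(1/2) : ℝ)) volume 0 1 :=
  intervalIntegral.intervalIntegrable_rpow' (by norm_num)

lemma sqrt_inv_val : ∫ s in (0:ℝ)..1, s ^ (-(1/2) : ℝ) = 2 := by
  rw [integral_rpow (Or.inl (by norm_num))]
  norm_num

lemma eq_on_Ioo : ∀ s ∈ Set.Ioo (0:ℝ) 1, (Real.sqrt s)⁻¹ = s ^ (-(1/2) : ℝ) := by
  intro s hs
  rw [Real.sqrt_eq_rpow, ← Real.rpow_neg hs.1.le]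

lemma int_s_right : IntegrableOn (fun s : ℝ => (Real.sqrt s)⁻¹) (Set.Ioo 0 1) ∧
    ∫ s in Set.Ioo (0:ℝ) 1, (Real.sqrt s)⁻¹ = 2 := by
  have h1 : IntegrableOn (fun s : ℝ => s ^ (-(1/2) : ℝ)) (Set.Ioo 0 1) :=
    (intervalIntegrable_iff_integrableOn_Ioo_of_le (by norm_num)).1 sqrt_inv_intint
  constructor
  · exact h1.congr_fun (fun s hs => (eq_on_Ioo s hs).symm) measurableSet_Ioo
  · rw [setIntegral_congr_fun measurableSet_Ioo eq_on_Ioo, ← integral_Ioc_eq_integral_Ioo,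
      ← intervalIntegral.integral_of_le (by norm_num : (0:ℝ) ≤ 1)]
    exact sqrt_inv_val

lemma int_s_left : IntegrableOn (fun s : ℝ => (Real.sqrt (1 - s))⁻¹) (Set.Ioo 0 1) ∧
    ∫ s in Set.Ioo (0:ℝ) 1, (Real.sqrt (1 - s))⁻¹ = 2 := by
  have h0 : IntervalIntegrable (fun s : ℝ => (1 - s) ^ (-(1/2) : ℝ)) volume 0 1 := by
    have := (sqrt_inv_intint.comp_sub_left 1).symm
    simpa using this
  have h1 : IntegrableOn (fun s : ℝ => (1 - s) ^ (-(1/2) : ℝ)) (Set.Ioo 0 1) :=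
    (intervalIntegrable_iff_integrableOn_Ioo_of_le (by norm_num)).1 h0
  have heq : ∀ s ∈ Set.Ioo (0:ℝ) 1, (Real.sqrt (1 - s))⁻¹ = (1 - s) ^ (-(1/2) : ℝ) := by
    intro s hs
    rw [Real.sqrt_eq_rpow, ← Real.rpow_neg (by linarith [hs.2])]
  constructor
  · exact h1.congr_fun (fun s hs => (heq s hs).symm) measurableSet_Ioo
  · rw [setIntegral_congr_fun measurableSet_Ioo heq, ← integral_Ioc_eq_integral_Ioo,
      ← intervalIntegral.integral_of_le (by norm_num : (0:ℝ) ≤ 1)]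
    have h2 : (∫ x in (0:ℝ)..1, (1 - x) ^ (-(1/2):ℝ)) = ∫ x in (0:ℝ)..1, x ^ (-(1/2):ℝ) := by
      rw [intervalIntegral.integral_comp_sub_left (fun s : ℝ => s ^ (-(1/2):ℝ)) 1]
      norm_num
    rw [h2]; exact sqrt_inv_val

lemma key_ineq {P Q R : ℝ} (hP : 0 < P) (hQ : 0 < Q) (hR : 0 < R) (h : R ≤ P + Q) :
    (P ^ 4)⁻¹ * (Q ^ 2)⁻¹ ≤ 4 * (R ^ 2)⁻¹ * ((P ^ 4)⁻¹ + (Q ^ 4)⁻¹) := by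
  have hR2 : R ^ 2 ≤ (P + Q) ^ 2 := by nlinarith
  have key : Q ^ 2 * R ^ 2 ≤ 4 * (P ^ 4 + Q ^ 4) := by
    nlinarith [mul_le_mul_of_nonneg_left hR2 (sq_nonneg Q), sq_nonneg (P ^ 2 - Q ^ 2),
      sq_nonneg (P * Q - Q ^ 2), sq_nonneg (P * Q), sq_nonneg Q, mul_pos hP hQ]
  have e1 : (P ^ 4)⁻¹ * (Q ^ 2)⁻¹ = 1 / (P ^ 4 * Q ^ 2) := by
    rw [one_div, mul_inv]
  have e2 : 4 * (R ^ 2)⁻¹ * ((P ^ 4)⁻¹ + (Q ^ 4)⁻¹) =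
      (4 * (P ^ 4 + Q ^ 4)) / (R ^ 2 * (P ^ 4 * Q ^ 4)) := by
    field_simp
    ring
  rw [e1, e2, div_le_div_iff₀ (by positivity) (by positivity)]
  nlinarith [mul_le_mul_of_nonneg_right key (by positivity : (0:ℝ) ≤ P ^ 4 * Q ^ 2)]

end StokesAux

open StokesAux

/-- Decay of the Duhamel integral at time 1 for the Stokes system with a self-similar
singular force: if `|F(x)| ≤ C(1+|x|)^{-2}` and the (gradient of the) Oseen kernel
satisfies `|∇S(z,t)| ≤ C(√t + |z|)^{-4}`, then
`W(x) = ∫₀¹∫ ∇S(x-y, 1-s) s⁻¹ F(y/√s) dy ds` satisfies `|W(x)| ≤ C(1+|x|)^{-2}`. -/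
theorem stokes_duhamel_decay
    (K : E3 → ℝ → (E3 →L[ℝ] E3))   -- the kernel `∇S`
    (hKmeas : StronglyMeasurable fun p : E3 × ℝ => K p.1 p.2)
    (C₁ : ℝ) (hC₁ : 0 < C₁)
    (hK : ∀ (z : E3) (t : ℝ), 0 < t → ‖K z t‖ ≤ C₁ * (Real.sqrt t + ‖z‖) ^ (-(4:ℝ)))
    (F : E3 → E3) (hFcont : Continuous F)
    (C₂ : ℝ) (hC₂ : 0 < C₂)
    (hF : ∀ y : E3, ‖F y‖ ≤ C₂ * (1 + ‖y‖) ^ (-(2:ℝ)))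
    (W : E3 → E3)
    (hW : W = fun x => ∫ s in Set.Ioo (0:ℝ) 1,
      ∫ y, s⁻¹ • (K (x - y) (1 - s)) (F ((Real.sqrt s)⁻¹ • y))) :
    ∃ C : ℝ, 0 < C ∧ ∀ x : E3, ‖W x‖ ≤ C * (1 + ‖x‖) ^ (-(2:ℝ)) := by
  refine ⟨16 * C₁ * C₂ * c0 + 1, ?_, ?_⟩
  · have h1 : 0 ≤ 16 * C₁ * C₂ * c0 :=
      mul_nonneg (by positivity) c0_nonneg
    linarith
  intro x
  have hRpos : (0:ℝ) < 1 + ‖x‖ := by positivity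
  have hrw : (1 + ‖x‖) ^ (-(2:ℝ)) = ((1 + ‖x‖) ^ 2)⁻¹ := rpow_neg_two hRpos
  set R2 : ℝ := ((1 + ‖x‖) ^ 2)⁻¹ with hR2
  have hR2pos : 0 < R2 := by positivity
  set D : ℝ := 4 * C₁ * C₂ * R2 * c0 with hD
  set g : ℝ → ℝ := fun s => D * ((Real.sqrt (1 - s))⁻¹ + (Real.sqrt s)⁻¹) with hg
  have hgint : IntegrableOn g (Set.Ioo (0:ℝ) 1) := by
    exact (int_s_left.1.add int_s_right.1).const_mul D
  have hgval : ∫ s in Set.Ioo (0:ℝ) 1, g s = D * 4 := by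
    simp only [hg]
    rw [integral_const_mul, integral_add int_s_left.1 int_s_right.1,
      int_s_left.2, int_s_right.2]
    norm_num
  have hmain : ∀ s ∈ Set.Ioo (0:ℝ) 1,
      ‖∫ y, s⁻¹ • (K (x - y) (1 - s)) (F ((Real.sqrt s)⁻¹ • y))‖ ≤ g s := by
    intro s hs
    obtain ⟨hs0, hs1⟩ := hs
    set a := Real.sqrt (1 - s) with ha'
    set b := Real.sqrt s with hb'
    have ha : 0 < a := Real.sqrt_pos.2 (by linarith)
    have hb : 0 < b := Real.sqrt_pos.2 hs0
    have ha2 : a ^ 2 = 1 - s := Real.sq_sqrt (by linarith)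
    have hb2 : b ^ 2 = s := Real.sq_sqrt hs0.le
    have hab : 1 ≤ a + b := by nlinarith [mul_pos ha hb]
    have hptwise : ∀ y : E3,
        ‖s⁻¹ • (K (x - y) (1 - s)) (F (b⁻¹ • y))‖ ≤
          (4 * C₁ * C₂ * R2) * (((a + ‖x - y‖) ^ 4)⁻¹ + ((b + ‖y‖) ^ 4)⁻¹) := by
      intro y
      have hP : 0 < a + ‖x - y‖ := by positivity
      have hQ : 0 < b + ‖y‖ := by positivity
      have hPQ : 1 + ‖x‖ ≤ (a + ‖x - y‖) + (b + ‖y‖) := by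
        have hx : ‖x‖ ≤ ‖x - y‖ + ‖y‖ := by
          have := norm_add_le (x - y) y
          simpa using this
        linarith
      have h1 : ‖K (x - y) (1 - s)‖ ≤ C₁ * ((a + ‖x - y‖) ^ 4)⁻¹ := by
        have h := hK (x - y) (1 - s) (by linarith)
        rwa [← ha', rpow_neg_four (by positivity)] at h
      have h2 : ‖F (b⁻¹ • y)‖ ≤ C₂ * ((1 + b⁻¹ * ‖y‖) ^ 2)⁻¹ := by
        have h := hF (b⁻¹ • y)
        rwa [norm_smul, Real.norm_eq_abs, abs_of_pos (inv_pos.2 hb),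
          rpow_neg_two (by positivity)] at h
      have h3 : s⁻¹ * ((1 + b⁻¹ * ‖y‖) ^ 2)⁻¹ = ((b + ‖y‖) ^ 2)⁻¹ := by
        rw [← hb2]
        have he : 1 + b⁻¹ * ‖y‖ = b⁻¹ * (b + ‖y‖) := by field_simp
        rw [he]
        have hQ0 : b + ‖y‖ ≠ 0 := hQ.ne'
        field_simp
      have hnorm : ‖s⁻¹ • (K (x - y) (1 - s)) (F (b⁻¹ • y))‖
          = s⁻¹ * ‖(K (x - y) (1 - s)) (F (b⁻¹ • y))‖ := by
        rw [norm_smul, Real.norm_eq_abs, abs_of_pos (inv_pos.2 hs0)]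
      have hop : ‖(K (x - y) (1 - s)) (F (b⁻¹ • y))‖
          ≤ ‖K (x - y) (1 - s)‖ * ‖F (b⁻¹ • y)‖ :=
        (K (x - y) (1 - s)).le_opNorm _
      have hmul : ‖K (x - y) (1 - s)‖ * ‖F (b⁻¹ • y)‖
          ≤ (C₁ * ((a + ‖x - y‖) ^ 4)⁻¹) * (C₂ * ((1 + b⁻¹ * ‖y‖) ^ 2)⁻¹) :=
        mul_le_mul h1 h2 (norm_nonneg _) (by positivity)
      calc ‖s⁻¹ • (K (x - y) (1 - s)) (F (b⁻¹ • y))‖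
          = s⁻¹ * ‖(K (x - y) (1 - s)) (F (b⁻¹ • y))‖ := hnorm
        _ ≤ s⁻¹ * ((C₁ * ((a + ‖x - y‖) ^ 4)⁻¹) * (C₂ * ((1 + b⁻¹ * ‖y‖) ^ 2)⁻¹)) := by
            exact mul_le_mul_of_nonneg_left (le_trans hop hmul) (by positivity)
        _ = (C₁ * C₂) * (((a + ‖x - y‖) ^ 4)⁻¹ * (s⁻¹ * ((1 + b⁻¹ * ‖y‖) ^ 2)⁻¹)) := by
            ring
        _ = (C₁ * C₂) * (((a + ‖x - y‖) ^ 4)⁻¹ * ((b + ‖y‖) ^ 2)⁻¹) := by rw [h3]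
        _ ≤ (C₁ * C₂) * (4 * (((1 + ‖x‖) ^ 2)⁻¹) *
              ((((a + ‖x - y‖) ^ 4)⁻¹ + ((b + ‖y‖) ^ 4)⁻¹))) := by
            exact mul_le_mul_of_nonneg_left (key_ineq hP hQ hRpos hPQ) (by positivity)
        _ = (4 * C₁ * C₂ * R2) * (((a + ‖x - y‖) ^ 4)⁻¹ + ((b + ‖y‖) ^ 4)⁻¹) := by
            rw [hR2]; ring
    have hI1 : Integrable (fun y : E3 => ((a + ‖x - y‖) ^ 4)⁻¹) :=
      (integrable_comp_sub_left (fun z : E3 => ((a + ‖z‖) ^ 4)⁻¹) x).2 (integrable_shift ha)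
    have hI2 : Integrable (fun y : E3 => ((b + ‖y‖) ^ 4)⁻¹) := integrable_shift hb
    calc ‖∫ y, s⁻¹ • (K (x - y) (1 - s)) (F (b⁻¹ • y))‖
        ≤ ∫ y, ‖s⁻¹ • (K (x - y) (1 - s)) (F (b⁻¹ • y))‖ := norm_integral_le_integral_norm _
      _ ≤ ∫ y, (4 * C₁ * C₂ * R2) * (((a + ‖x - y‖) ^ 4)⁻¹ + ((b + ‖y‖) ^ 4)⁻¹) :=
          integral_mono_of_nonneg (Eventually.of_forall fun y => norm_nonneg _)
            ((hI1.add hI2).const_mul _) (Eventually.of_forall hptwise)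
      _ = (4 * C₁ * C₂ * R2) *
            ((∫ y : E3, ((a + ‖x - y‖) ^ 4)⁻¹) + ∫ y : E3, ((b + ‖y‖) ^ 4)⁻¹) := by
          rw [integral_const_mul, integral_add hI1 hI2]
      _ = (4 * C₁ * C₂ * R2) * (c0 * a⁻¹ + c0 * b⁻¹) := by
          rw [integral_sub_left_eq_self (fun z : E3 => ((a + ‖z‖) ^ 4)⁻¹) volume x,
            integral_shift ha, integral_shift hb]
      _ = g s := by
          simp only [hg, hD, ← ha', ← hb']
          ring
  calc ‖W x‖
      = ‖∫ s in Set.Ioo (0:ℝ) 1,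
          ∫ y, s⁻¹ • (K (x - y) (1 - s)) (F ((Real.sqrt s)⁻¹ • y))‖ := by rw [hW]
    _ ≤ ∫ s in Set.Ioo (0:ℝ) 1,
          ‖∫ y, s⁻¹ • (K (x - y) (1 - s)) (F ((Real.sqrt s)⁻¹ • y))‖ :=
        norm_integral_le_integral_norm _
    _ ≤ ∫ s in Set.Ioo (0:ℝ) 1, g s := by
        refine integral_mono_of_nonneg (Eventually.of_forall fun s => norm_nonneg _) hgint ?_
        exact (ae_restrict_iff' measurableSet_Ioo).2 (ae_of_all _ hmain)
    _ = D * 4 := hgval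
    _ ≤ (16 * C₁ * C₂ * c0 + 1) * ((1 + ‖x‖) ^ 2)⁻¹ := by
        rw [hD, hR2]
        have hc := c0_nonneg
        have h2 : (0:ℝ) < ((1 + ‖x‖) ^ 2)⁻¹ := by positivity
        nlinarith [mul_pos (mul_pos hC₁ hC₂) h2]
    _ = (16 * C₁ * C₂ * c0 + 1) * (1 + ‖x‖) ^ (-(2:ℝ)) := by rw [hrw]
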